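/- arXiv:2410.04793 — 3 statements merged into one kernel-verified Lean document; each statement's English description precedes it below -/
import Mathlib

section
/- Every finitely generated submodule of a projective module over a von Neumann regular ring is a direct summand. -/
/-- In a von Neumann regular ring, the span of a finite set has a right unit. -/
theorem vnr_span_right_unit {R : Type*} [Ring R] (hR : ∀ a : R, ∃ x : R, a = a * x * a)
    (S : Finset R) :
    ∃ e ∈ Submodule.span R (S : Set R), ∀ a ∈ Submodule.span R (S : Set R), a * e = a := by
  classical
  induction S using Finset.induction_on with
  | empty =>
    refine ⟨0, by simp, ?_⟩
    intro a ha
    simp only [Finset.coe_empty, Submodule.span_empty, Submodule.mem_bot] at ha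
    simp [ha]
  | @insert a S ha IH =>
    obtain ⟨e, heI, he⟩ := IH
    obtain ⟨a', ha'⟩ : ∃ a' : R, a' = a - a * e := ⟨_, rfl⟩
    obtain ⟨x, hx⟩ := hR a'
    obtain ⟨f, hf⟩ : ∃ f : R, f = x * a' := ⟨_, rfl⟩
    have hIns : Submodule.span R ((insert a S : Finset R) : Set R)
        = Submodule.span R {a} ⊔ Submodule.span R (S : Set R) := by
      rw [Finset.coe_insert, Submodule.span_insert]
    -- a*e ∈ span S
    have haeS : a * e ∈ Submodule.span R (S : Set R) := by
      simpa [smul_eq_mul] using Submodule.smul_mem _ a heI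
    have ha'mem : a' ∈ Submodule.span R ((insert a S : Finset R) : Set R) := by
      rw [ha', hIns]
      exact sub_mem (Submodule.mem_sup_left (Submodule.mem_span_singleton_self a))
        (Submodule.mem_sup_right haeS)
    have hfmem : f ∈ Submodule.span R ((insert a S : Finset R) : Set R) := by
      simpa [hf, smul_eq_mul] using Submodule.smul_mem _ x ha'mem
    have hee : e * e = e := he e heI
    have ha'e : a' * e = 0 := by
      have : (a * e) * e = a * e := he _ haeS
      simp [ha', sub_mul, this]
    have hfe : f * e = 0 := by
      rw [hf, mul_assoc, ha'e, mul_zero]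
    have ha'f : a' * f = a' := by
      rw [hf, ← mul_assoc, ← hx]
    refine ⟨e + f - e * f, ?_, ?_⟩
    · rw [hIns] at hfmem ⊢
      refine sub_mem (add_mem (Submodule.mem_sup_right heI) hfmem) ?_
      simpa [smul_eq_mul] using Submodule.smul_mem _ e hfmem
    · intro c hc
      rw [hIns] at hc
      obtain ⟨u, hu, v, hv, rfl⟩ := Submodule.mem_sup.mp hc
      obtain ⟨r, rfl⟩ := Submodule.mem_span_singleton.mp hu
      -- r • a = r • a' + r • (a*e)
      have key : ∀ w, w * e = w → w * (e + f - e * f) = w := by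
        intro w hw
        rw [mul_sub, mul_add, ← mul_assoc, hw, add_sub_cancel_right]
      have hva' : a' * (e + f - e * f) = a' := by
        rw [mul_sub, mul_add, ← mul_assoc, ha'e, ha'f, zero_mul, zero_add, sub_zero]
      have hdecomp : r • a = r • a' + r • (a * e) := by
        rw [ha']; rw [smul_sub]; abel
      rw [hdecomp, add_assoc, add_mul, smul_mul_assoc, hva']
      have hv' : r • (a * e) + v ∈ Submodule.span R (S : Set R) :=
        add_mem (Submodule.smul_mem _ _ haeS) hv
      rw [key _ (he _ hv')]

/-- A finitely generated submodule of a finitely supported part of a free module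
admits a linear projection onto it, over a von Neumann regular ring. -/
theorem vnr_free_retraction {R : Type*} [Ring R] (hR : ∀ a : R, ∃ x : R, a = a * x * a)
    {P : Type*} (t : Finset P) :
    ∀ M : Submodule R (P →₀ R), M.FG → M ≤ Finsupp.supported R R (t : Set P) →
      ∃ g : (P →₀ R) →ₗ[R] (P →₀ R), (∀ x ∈ M, g x = x) ∧ LinearMap.range g ≤ M := by
  classical
  induction t using Finset.induction_on with
  | empty =>
    intro M _ hMsup
    refine ⟨0, ?_, by simp⟩
    intro x hx
    have := hMsup hx
    rw [Finset.coe_empty, Finsupp.supported_empty, Submodule.mem_bot] at this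
    simp [this]
  | @insert p t hp IH =>
    intro M hMfg hMsup
    -- the "ideal of p-th coordinates"
    set π : (P →₀ R) →ₗ[R] R := Finsupp.lapply p with hπ
    set I : Submodule R R := M.map π with hI
    obtain ⟨S, hS⟩ := hMfg.map π
    obtain ⟨e, heI, he⟩ := vnr_span_right_unit hR S
    rw [hS] at heI he
    rw [← hI] at heI he
    obtain ⟨m₀, hm₀M, hm₀e⟩ := heI
    -- τ v = v - (v p) • m₀
    set τ : (P →₀ R) →ₗ[R] (P →₀ R) :=
      LinearMap.id - (LinearMap.toSpanSingleton R (P →₀ R) m₀) ∘ₗ π with hτ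
    have hτ_apply : ∀ v, τ v = v - (π v) • m₀ := fun v => rfl
    set M₀ : Submodule R (P →₀ R) := M.map τ with hM₀
    have hM₀M : M₀ ≤ M := by
      rintro _ ⟨m, hm, rfl⟩
      rw [hτ_apply]
      exact sub_mem hm (Submodule.smul_mem _ _ hm₀M)
    have hπτ : ∀ m ∈ M, π (τ m) = 0 := by
      intro m hm
      have hme : π m * e = π m := he _ ⟨m, hm, rfl⟩
      have : π (τ m) = π m - π m * π m₀ := by
        rw [hτ_apply]; simp [smul_eq_mul]
      rw [this, hm₀e, hme, sub_self]
    have hM₀sup : M₀ ≤ Finsupp.supported R R (t : Set P) := by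
      rintro _ ⟨m, hm, rfl⟩
      rw [Finsupp.mem_supported]
      intro q hq
      have hq' : q ∈ (τ m).support := hq
      have hqins : q ∈ (insert p t : Finset P) := by
        have h1 : (m : P →₀ R).support ⊆ (insert p t : Finset P) := by
          have := (Finsupp.mem_supported R m).mp (hMsup hm)
          exact_mod_cast this
        have h2 : (m₀ : P →₀ R).support ⊆ (insert p t : Finset P) := by
          have := (Finsupp.mem_supported R m₀).mp (hMsup hm₀M)
          exact_mod_cast this
        have : (τ m) q ≠ 0 := Finsupp.mem_support_iff.mp hq'
        rw [hτ_apply] at this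
        by_contra hqn
        have hm0 : m q = 0 := by
          by_contra h
          exact hqn (h1 (Finsupp.mem_support_iff.mpr h))
        have hm₀0 : m₀ q = 0 := by
          by_contra h
          exact hqn (h2 (Finsupp.mem_support_iff.mpr h))
        apply this
        simp [Finsupp.sub_apply, hm0, hm₀0]
      have hqp : q ≠ p := by
        rintro rfl
        exact Finsupp.mem_support_iff.mp hq' (hπτ m hm)
      rcases Finset.mem_insert.mp hqins with h | h
      · exact absurd h hqp
      · exact h
    obtain ⟨g₀, hg₀id, hg₀range⟩ := IH M₀ (hMfg.map τ) hM₀sup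
    refine ⟨g₀ ∘ₗ τ + (LinearMap.toSpanSingleton R (P →₀ R) m₀) ∘ₗ
        (LinearMap.toSpanSingleton R R e) ∘ₗ π, ?_, ?_⟩
    · intro m hm
      have h1 : g₀ (τ m) = τ m := hg₀id _ ⟨m, hm, rfl⟩
      have h2 : π m * e = π m := he _ ⟨m, hm, rfl⟩
      show g₀ (τ m) + (LinearMap.toSpanSingleton R (P →₀ R) m₀)
          ((LinearMap.toSpanSingleton R R e) (π m)) = m
      rw [h1, hτ_apply, LinearMap.toSpanSingleton_apply, LinearMap.toSpanSingleton_apply,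
        smul_eq_mul, h2]
      abel
    · rintro _ ⟨v, rfl⟩
      simp only [LinearMap.add_apply, LinearMap.comp_apply]
      refine add_mem (hM₀M (hg₀range ⟨τ v, rfl⟩)) ?_
      simp only [LinearMap.toSpanSingleton_apply]
      exact Submodule.smul_mem _ _ hm₀M

/-- Every finitely generated submodule of a projective module over a von Neumann
regular ring is a direct summand. -/
theorem vonNeumannRegular_fg_submodule_isCompl (R : Type*) [Ring R]
    (hR : ∀ a : R, ∃ x : R, a = a * x * a)
    (P : Type*) [AddCommGroup P] [Module R P] [Module.Projective R P]
    (N : Submodule R P) (hN : N.FG) :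
    ∃ C : Submodule R P, IsCompl N C := by
  classical
  obtain ⟨s, hs⟩ := Module.projective_def.mp ‹Module.Projective R P›
  set πs : (P →₀ R) →ₗ[R] P := Finsupp.linearCombination R id with hπs
  set M : Submodule R (P →₀ R) := N.map s with hM
  obtain ⟨S, hS⟩ := hN.map s
  set t : Finset P := S.sup Finsupp.support with ht
  have hMsup : M ≤ Finsupp.supported R R (t : Set P) := by
    rw [← hM] at hS
    rw [← hS, Submodule.span_le]
    intro f hf
    rw [SetLike.mem_coe, Finsupp.mem_supported]
    exact_mod_cast Finset.le_sup (f := Finsupp.support) hf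
  obtain ⟨g, hgid, hgrange⟩ := vnr_free_retraction hR t M (hN.map s) hMsup
  have hmem : ∀ v : P, πs (g (s v)) ∈ N := by
    intro v
    have : g (s v) ∈ M := hgrange ⟨s v, rfl⟩
    obtain ⟨y, hy, hyeq⟩ := this
    rw [← hyeq, hs y]
    exact hy
  set f : P →ₗ[R] N := LinearMap.codRestrict N (πs ∘ₗ g ∘ₗ s) hmem with hfdef
  have hfproj : ∀ x : N, f x = x := by
    intro x
    apply Subtype.ext
    have hsx : s (x : P) ∈ M := Submodule.mem_map_of_mem x.2
    show πs (g (s (x : P))) = (x : P)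
    rw [hgid _ hsx]
    exact hs (x : P)
  exact ⟨LinearMap.ker f, LinearMap.isCompl_of_proj hfproj⟩
end

section
/- If there is a uniform bound n on the projective dimension of all finitely presented R-modules, then every R-module has flat dimension at most n; in particular R has finite weak global dimension. -/
universe u

open CategoryTheory

/-- `M` has projective dimension at most `n`: there is a projective resolution
`0 → P_n → ⋯ → P_0 → M → 0` of length `n` (encoded as an `ℕ`-indexed resolution
which vanishes in degrees `> n`). -/
def HasProjDimLE {R : Type u} [Ring R] (M : ModuleCat.{u} R) (n : ℕ) : Prop :=
  ∃ (P : ℕ → ModuleCat.{u} R) (d : ∀ i, P (i + 1) ⟶ P i) (ε : P 0 ⟶ M),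
    (∀ i, Module.Projective R (P i)) ∧ Function.Surjective ε ∧
    LinearMap.ker ε.hom = LinearMap.range (d 0).hom ∧
    (∀ i, LinearMap.ker (d i).hom = LinearMap.range (d (i + 1)).hom) ∧
    ∀ i, n < i → Subsingleton (P i)

/-- `M` has flat dimension at most `n`: there is a flat resolution
`0 → F_n → ⋯ → F_0 → M → 0` of length `n`. -/
def HasFlatDimLE {R : Type u} [CommRing R] (M : ModuleCat.{u} R) (n : ℕ) : Prop :=
  ∃ (F : ℕ → ModuleCat.{u} R) (d : ∀ i, F (i + 1) ⟶ F i) (ε : F 0 ⟶ M),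
    (∀ i, Module.Flat R (F i)) ∧ Function.Surjective ε ∧
    LinearMap.ker ε.hom = LinearMap.range (d 0).hom ∧
    (∀ i, LinearMap.ker (d i).hom = LinearMap.range (d (i + 1)).hom) ∧
    ∀ i, n < i → Subsingleton (F i)

section Vanish

variable {R : Type u} [CommRing R]

open LinearMap TensorProduct

lemma tswap_apply {M N P Q : Type u} [AddCommGroup M] [AddCommGroup N] [AddCommGroup P]
    [AddCommGroup Q] [Module R M] [Module R N] [Module R P] [Module R Q]
    (f : M →ₗ[R] P) (g : N →ₗ[R] Q) (x : M ⊗[R] N) :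
    f.rTensor Q (g.lTensor M x) = g.lTensor P (f.rTensor N x) := by
  rw [← LinearMap.comp_apply, ← LinearMap.comp_apply, LinearMap.rTensor_comp_lTensor,
    LinearMap.lTensor_comp_rTensor]

/-- If `C` has a flat resolution of length `n`, then for any exact sequence of flat modules
`F`, the complex `C ⊗ F` is exact in degrees `> n`. -/
lemma vanish : ∀ (n : ℕ) (C : Type u) [AddCommGroup C] [Module R C],
    HasFlatDimLE (ModuleCat.of R C) n →
    ∀ (F : ℕ → Type u) [∀ i, AddCommGroup (F i)] [∀ i, Module R (F i)]
      (d : ∀ i, F (i + 1) →ₗ[R] F i),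
      (∀ i, Module.Flat R (F i)) →
      (∀ i, LinearMap.ker (d i) = LinearMap.range (d (i + 1))) →
      ∀ k, n ≤ k →
        LinearMap.ker ((d k).lTensor C) ≤ LinearMap.range ((d (k + 1)).lTensor C) := by
  intro n
  induction n with
  | zero =>
    intro C _ _ hC F _ _ d hF hex k _
    obtain ⟨P, dP, εP, hPflat, hPsur, hP0, _, hPsub⟩ := hC
    -- `C` is flat, being isomorphic to `P 0`.
    have h1 : Subsingleton (P 1) := hPsub 1 (by omega)
    have hker : LinearMap.ker εP.hom = ⊥ := by
      rw [hP0]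
      rw [Submodule.eq_bot_iff]
      rintro x ⟨y, rfl⟩
      rw [Subsingleton.elim y 0, map_zero]
    have hinj : Function.Injective εP.hom := by
      rwa [← LinearMap.ker_eq_bot (f := εP.hom)]
    haveI : Module.Flat R C := by
      haveI := hPflat 0
      exact Module.Flat.of_linearEquiv (LinearEquiv.ofBijective
        εP.hom ⟨hinj, hPsur⟩).symm
    intro x hx
    exact (Module.Flat.lTensor_exact C (LinearMap.exact_iff.mpr (hex k)) x).mp hx
  | succ n IH =>
    intro C _ _ hC F _ _ d hF hex k hk
    obtain ⟨P, dP, εP, hPflat, hPsur, hP0, hPex, hPsub⟩ := hC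
    obtain ⟨m, rfl⟩ : ∃ m, k = m + 1 := ⟨k - 1, by omega⟩
    set C' : Type u := ↥(LinearMap.ker εP.hom)
    -- the peeled-off resolution of `C'`
    have hC'res : HasFlatDimLE (ModuleCat.of R C') n := by
      refine ⟨fun i => P (i + 1), fun i => dP (i + 1),
        ModuleCat.ofHom (LinearMap.codRestrict _ (dP 0).hom (fun c => by
          rw [hP0]; exact ⟨c, rfl⟩)), fun i => hPflat (i + 1), ?_, ?_,
        fun i => hPex (i + 1), fun i hi => hPsub (i + 1) (by omega)⟩
      · rintro ⟨y, hy⟩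
        rw [hP0] at hy
        obtain ⟨x, hx⟩ := hy
        exact ⟨x, Subtype.ext hx⟩
      · rw [ModuleCat.hom_ofHom, LinearMap.ker_codRestrict]
        exact hPex 0
    have IH' := IH C' hC'res F d hF hex
    intro x hx
    set f : C' →ₗ[R] P 0 := Submodule.subtype _ with hf
    set g : P 0 →ₗ[R] C := εP.hom with hg
    have hfg : Function.Exact f g := LinearMap.exact_subtype_ker_map _
    obtain ⟨y, rfl⟩ := LinearMap.rTensor_surjective (F (m + 2)) (g := g) hPsur x
    set b := (d (m + 1)).lTensor (P 0) y with hb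
    have hbg : g.rTensor (F (m + 1)) b = 0 := by
      rw [hb, tswap_apply]
      exact hx
    obtain ⟨z, hz⟩ := (rTensor_exact (F (m + 1)) hfg hPsur b).mp hbg
    have hcomp : (d m) ∘ₗ (d (m + 1)) = 0 := by
      ext a
      simp only [LinearMap.comp_apply, LinearMap.zero_apply]
      rw [← LinearMap.mem_ker, hex m]
      exact LinearMap.mem_range_self _ _
    have hzcyc : (d m).lTensor C' z = 0 := by
      haveI := hF m
      apply Module.Flat.rTensor_preserves_injective_linearMap (M := F m) f
        (Submodule.injective_subtype _)
      rw [map_zero, tswap_apply, hz, hb, ← LinearMap.lTensor_comp_apply, hcomp,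
        LinearMap.lTensor_zero, LinearMap.zero_apply]
    obtain ⟨w, hw⟩ := IH' m (by omega) hzcyc
    set y' := y - f.rTensor (F (m + 2)) w with hy'
    have hgf : g ∘ₗ f = 0 := by
      ext a
      exact a.2
    have h1 : g.rTensor (F (m + 2)) y' = g.rTensor (F (m + 2)) y := by
      rw [hy', map_sub, ← LinearMap.rTensor_comp_apply, hgf, LinearMap.rTensor_zero,
        LinearMap.zero_apply, sub_zero]
    have h2 : (d (m + 1)).lTensor (P 0) y' = 0 := by
      rw [hy', map_sub, ← hb, ← tswap_apply, hw, hz, sub_self]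
    haveI := hPflat 0
    obtain ⟨v, hv⟩ := (Module.Flat.lTensor_exact (M := P 0)
      (LinearMap.exact_iff.mpr (hex (m + 1))) y').mp h2
    refine ⟨g.rTensor (F (m + 3)) v, ?_⟩
    rw [← tswap_apply, hv, h1]
end Vanish


section Rest

variable {R : Type u} [CommRing R]

open LinearMap TensorProduct

variable (R) in
/-- the canonical surjection from the free module on `M` to `M`. -/
noncomputable def epsOf (M : Type u) [AddCommGroup M] [Module R M] :
    (M →₀ R) →ₗ[R] M := Finsupp.linearCombination R id

lemma epsOf_surjective (M : Type u) [AddCommGroup M] [Module R M] :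
    Function.Surjective (epsOf R M) :=
  Finsupp.linearCombination_surjective R Function.surjective_id

variable (R) in
/-- The syzygy sequence of `N` : `Syz 0 = N`, `Syz (i+1) = ker((Syz i →₀ R) → Syz i)`. -/
noncomputable def Syz (N : Type u) [AddCommGroup N] [Module R N] : ℕ → ModuleCat.{u} R
  | 0 => ModuleCat.of R N
  | (i + 1) => ModuleCat.of R (LinearMap.ker (epsOf R (Syz N i)))

variable (R) in
noncomputable def SyzF (N : Type u) [AddCommGroup N] [Module R N] (i : ℕ) : ModuleCat.{u} R :=
  ModuleCat.of R ((Syz R N i : Type u) →₀ R)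

variable (R) in
noncomputable def SyzEps (N : Type u) [AddCommGroup N] [Module R N] (i : ℕ) :
    SyzF R N i →ₗ[R] Syz R N i := epsOf R (Syz R N i)

variable (R) in
noncomputable def SyzD (N : Type u) [AddCommGroup N] [Module R N] (i : ℕ) :
    SyzF R N (i + 1) →ₗ[R] SyzF R N i :=
  (LinearMap.ker (epsOf R (Syz R N i))).subtype ∘ₗ (SyzEps R N (i + 1))

variable {N : Type u} [AddCommGroup N] [Module R N]

lemma SyzEps_surjective (i : ℕ) : Function.Surjective (SyzEps R N i) :=
  epsOf_surjective _

lemma ker_SyzEps (i : ℕ) :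
    LinearMap.ker (SyzEps R N i) = LinearMap.range (SyzD R N i) := by
  erw [SyzD, LinearMap.range_comp, LinearMap.range_eq_top.mpr (SyzEps_surjective (i+1)),
    Submodule.map_top, Submodule.range_subtype]
  rfl

lemma ker_SyzD (i : ℕ) :
    LinearMap.ker (SyzD R N i) = LinearMap.range (SyzD R N (i + 1)) := by
  erw [SyzD, LinearMap.ker_comp, Submodule.ker_subtype, Submodule.comap_bot]
  exact ker_SyzEps (i + 1)

instance SyzF_free (i : ℕ) : Module.Free R (SyzF R N i) :=
  inferInstanceAs (Module.Free R ((Syz R N i : Type u) →₀ R))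

instance SyzF_flat (i : ℕ) : Module.Flat R (SyzF R N i) := inferInstance



/-- The flatness criterion: if `F` is an exact sequence of flat modules augmented over `K`,
and the complex `C ⊗ F` is exact at position 1 for every finitely presented `C`,
then `K` is flat. -/
lemma flat_of_vanish (F : ℕ → Type u) [∀ i, AddCommGroup (F i)] [∀ i, Module R (F i)]
    (d : ∀ i, F (i + 1) →ₗ[R] F i)
    (hF : ∀ i, Module.Flat R (F i))
    (hex : ∀ i, LinearMap.ker (d i) = LinearMap.range (d (i + 1)))
    (K : Type u) [AddCommGroup K] [Module R K] (ε : F 0 →ₗ[R] K)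
    (hsur : Function.Surjective ε) (hker : LinearMap.ker ε = LinearMap.range (d 0))
    (hvan : ∀ (C : Type u) [AddCommGroup C] [Module R C], Module.FinitePresentation R C →
      LinearMap.ker ((d 0).lTensor C) ≤ LinearMap.range ((d 1).lTensor C)) :
    Module.Flat R K := by
  rw [Module.Flat.iff_rTensor_injective]
  intro I hI
  have hCfp : Module.FinitePresentation R (R ⧸ I) :=
    Module.finitePresentation_of_free_of_surjective I.mkQ (Submodule.mkQ_surjective I)
      (by rwa [Submodule.ker_mkQ])
  rw [injective_iff_map_eq_zero]
  intro x hx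
  obtain ⟨y, rfl⟩ := LinearMap.lTensor_surjective (↥I) hsur x
  set b := I.subtype.rTensor (F 0) y with hbdef
  have hb : ε.lTensor R b = 0 := by
    rw [hbdef, ← tswap_apply]
    exact hx
  have hexRε : Function.Exact ((d 0).lTensor R) (ε.lTensor R) :=
    lTensor_exact R (LinearMap.exact_iff.mpr hker) hsur
  obtain ⟨z, hz⟩ := (hexRε b).mp hb
  have hfgI : Function.Exact I.subtype I.mkQ := LinearMap.exact_subtype_mkQ I
  have hmkQsub : I.mkQ ∘ₗ I.subtype = 0 := by
    ext a
    exact (Submodule.Quotient.mk_eq_zero I).mpr a.2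
  set w := I.mkQ.rTensor (F 1) z with hwdef
  have hw : w ∈ LinearMap.ker ((d 0).lTensor (R ⧸ I)) := by
    rw [LinearMap.mem_ker, hwdef, ← tswap_apply, hz, hbdef, ← LinearMap.rTensor_comp_apply,
      hmkQsub, LinearMap.rTensor_zero, LinearMap.zero_apply]
  obtain ⟨v, hv⟩ := hvan (R ⧸ I) hCfp hw
  obtain ⟨u, hu⟩ := LinearMap.rTensor_surjective (F 2) (Submodule.mkQ_surjective I) v
  have hcomp0 : (d 0) ∘ₗ (d 1) = 0 := by
    ext a
    simp only [LinearMap.comp_apply, LinearMap.zero_apply]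
    rw [← LinearMap.mem_ker, hex 0]
    exact LinearMap.mem_range_self _ _
  set z' := z - (d 1).lTensor R u with hz'def
  have hz'1 : (d 0).lTensor R z' = b := by
    rw [hz'def, map_sub, hz, ← LinearMap.lTensor_comp_apply, hcomp0, LinearMap.lTensor_zero,
      LinearMap.zero_apply, sub_zero]
  have hz'2 : I.mkQ.rTensor (F 1) z' = 0 := by
    rw [hz'def, map_sub, ← hwdef, tswap_apply, hu, hv, sub_self]
  obtain ⟨t, ht⟩ := (rTensor_exact (F 1) hfgI (Submodule.mkQ_surjective I) z').mp hz'2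
  have hyt : (d 0).lTensor (↥I) t = y := by
    haveI := hF 0
    apply Module.Flat.rTensor_preserves_injective_linearMap (M := F 0) I.subtype
      (Submodule.injective_subtype I)
    rw [tswap_apply, ht, hz'1, hbdef]
  have hepsd : ε ∘ₗ (d 0) = 0 := by
    ext a
    simp only [LinearMap.comp_apply, LinearMap.zero_apply]
    rw [← LinearMap.mem_ker, hker]
    exact LinearMap.mem_range_self _ _
  rw [← hyt, ← LinearMap.lTensor_comp_apply, hepsd, LinearMap.lTensor_zero,
    LinearMap.zero_apply]

lemma extend_resolution (N : Type u) [AddCommGroup N] [Module R N]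
    (F0 : Type u) [AddCommGroup F0] [Module R F0] (hF0 : Module.Flat R F0)
    (ε : F0 →ₗ[R] N) (hsur : Function.Surjective ε) (m : ℕ)
    (hG : HasFlatDimLE (ModuleCat.of R ↥(LinearMap.ker ε)) m) :
    HasFlatDimLE (ModuleCat.of R N) (m + 1) := by
  obtain ⟨G, dG, εG, hGflat, hGsur, hG0, hGex, hGsub⟩ := hG
  refine ⟨fun i => match i with
      | 0 => ModuleCat.of R F0
      | (i + 1) => G i,
    fun i => match i with
      | 0 => ModuleCat.ofHom ((LinearMap.ker ε).subtype ∘ₗ εG.hom :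
          G 0 →ₗ[R] F0)
      | (i + 1) => dG i,
    ModuleCat.ofHom ε, ?_, hsur, ?_, ?_, ?_⟩
  · rintro (_ | i)
    · exact hF0
    · exact hGflat i
  · show LinearMap.ker ε = LinearMap.range ((LinearMap.ker ε).subtype ∘ₗ εG.hom)
    rw [LinearMap.range_comp, (LinearMap.range_eq_top (f := εG.hom)).mpr hGsur, Submodule.map_top,
      Submodule.range_subtype]
  · rintro (_ | i)
    · show LinearMap.ker ((LinearMap.ker ε).subtype ∘ₗ εG.hom) = LinearMap.range (dG 0).hom
      rw [LinearMap.ker_comp, Submodule.ker_subtype, Submodule.comap_bot]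
      exact hG0
    · exact hGex i
  · rintro (_ | i) hi
    · omega
    · exact hGsub i (by omega)

lemma punit_submodule (S T : Submodule R PUnit.{u + 1}) : S = T := by
  ext x
  rw [Subsingleton.elim x 0]
  exact iff_of_true S.zero_mem T.zero_mem

lemma trunc : ∀ (m : ℕ) (N : Type u) [AddCommGroup N] [Module R N]
    (F : ℕ → Type u) [∀ i, AddCommGroup (F i)] [∀ i, Module R (F i)]
    (d : ∀ i, F (i + 1) →ₗ[R] F i) (ε : F 0 →ₗ[R] N),
    (∀ i, Module.Flat R (F i)) → Function.Surjective ε →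
    LinearMap.ker ε = LinearMap.range (d 0) →
    (∀ i, LinearMap.ker (d i) = LinearMap.range (d (i + 1))) →
    ∀ (K : Type u) [AddCommGroup K] [Module R K], Module.Flat R K →
    ∀ (κ : F m →ₗ[R] K), Function.Surjective κ →
    LinearMap.ker κ = LinearMap.range (d m) →
    HasFlatDimLE (ModuleCat.of R N) m := by
  intro m
  induction m with
  | zero =>
    intro N _ _ F _ _ d ε hF hsur h0 hex K _ _ hKflat κ hκsur hκ0
    haveI : Module.Flat R N := by
      have e : N ≃ₗ[R] K :=
        ((LinearMap.quotKerEquivOfSurjective ε hsur).symm.trans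
          (Submodule.quotEquivOfEq _ _ (h0.trans hκ0.symm))).trans
          (LinearMap.quotKerEquivOfSurjective κ hκsur)
      exact Module.Flat.of_linearEquiv e
    refine ⟨fun i => match i with
        | 0 => ModuleCat.of R N
        | (i + 1) => ModuleCat.of R PUnit.{u + 1},
      fun i => match i with
        | 0 => ModuleCat.ofHom (0 : PUnit.{u + 1} →ₗ[R] N)
        | (i + 1) => ModuleCat.ofHom (0 : PUnit.{u + 1} →ₗ[R] PUnit.{u + 1}),
      ModuleCat.ofHom (LinearMap.id : N →ₗ[R] N), ?_, Function.surjective_id, ?_, ?_, ?_⟩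
    · rintro (_ | i)
      · exact inferInstanceAs (Module.Flat R N)
      · exact inferInstanceAs (Module.Flat R PUnit.{u + 1})
    · show LinearMap.ker (LinearMap.id : N →ₗ[R] N) = LinearMap.range (0 : PUnit.{u + 1} →ₗ[R] N)
      rw [LinearMap.ker_id, LinearMap.range_zero]
    · rintro (_ | i)
      · exact punit_submodule _ _
      · exact punit_submodule _ _
    · rintro (_ | i) hi
      · omega
      · infer_instance
  | succ m IH =>
    intro N _ _ F _ _ d ε hF hsur h0 hex K _ _ hKflat κ hκsur hκ0
    refine extend_resolution N (F 0) (hF 0) ε hsur m ?_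
    refine IH ↥(LinearMap.ker ε) (fun i => F (i + 1)) (fun i => d (i + 1))
      (LinearMap.codRestrict _ (d 0) (fun c => by rw [h0]; exact ⟨c, rfl⟩))
      (fun i => hF (i + 1)) ?_ ?_ (fun i => hex (i + 1)) K hKflat κ hκsur hκ0
    · rintro ⟨y, hy⟩
      rw [h0] at hy
      obtain ⟨x, hx⟩ := hy
      exact ⟨x, Subtype.ext hx⟩
    · rw [LinearMap.ker_codRestrict]
      exact hex 0

end Rest

/-- If there is a uniform bound `n` on the projective dimension of all finitely
presented `R`-modules, then every `R`-module has flat dimension at most `n`. -/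
theorem flatDim_le_of_uniform_projDim_bound (R : Type u) [CommRing R] (n : ℕ)
    (h : ∀ (M : Type u) [AddCommGroup M] [Module R M],
      Module.FinitePresentation R M → HasProjDimLE (ModuleCat.of R M) n) :
    ∀ (N : Type u) [AddCommGroup N] [Module R N],
      HasFlatDimLE (ModuleCat.of R N) n := by
  intro N _ _
  have hKflat : Module.Flat R (Syz R N n) := by
    refine flat_of_vanish (fun j => (SyzF R N (n + j) : Type u)) (fun j => SyzD R N (n + j))
      (fun j => SyzF_flat (n + j)) (fun j => ker_SyzD (n + j)) (Syz R N n)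
      (SyzEps R N n) (SyzEps_surjective n) (ker_SyzEps n) ?_
    intro C _ _ hfp
    have hflatres : HasFlatDimLE (ModuleCat.of R C) n := by
      obtain ⟨P, dP, εP, hPproj, h2, h3, h4, h5⟩ := h C hfp
      exact ⟨P, dP, εP, fun i => by haveI := hPproj i; exact inferInstance,
        h2, h3, h4, h5⟩
    exact vanish n C hflatres (fun i => (SyzF R N i : Type u)) (SyzD R N)
      (fun i => SyzF_flat i) ker_SyzD n le_rfl
  exact trunc n N (fun i => (SyzF R N i : Type u)) (SyzD R N) (SyzEps R N 0)
    (fun i => SyzF_flat i) (SyzEps_surjective 0) (ker_SyzEps 0) ker_SyzD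
    (Syz R N n) hKflat (SyzEps R N n) (SyzEps_surjective n) (ker_SyzEps n)
end

section
/- For a right coherent ring R, the weak global dimension of R is finite if and only if there is a uniform finite bound on the projective dimensions of all finitely presented right R-modules. -/
universe u

open CategoryTheory

set_option maxHeartbeats 4000000
set_option synthInstance.maxHeartbeats 400000

open Function LinearMap CategoryTheory

variable {R : Type u} [CommRing R]

section helpers

variable {S K : Type u} [AddCommGroup S] [Module R S] [AddCommGroup K] [Module R K]

lemma tensor_subsingleton_left (h : Subsingleton S) : Subsingleton (TensorProduct R S K) := by
  constructor
  intro x y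
  have hz : ∀ z : TensorProduct R S K, z = 0 := by
    intro z
    induction z using TensorProduct.induction_on with
    | zero => rfl
    | tmul s k => rw [Subsingleton.elim s 0, TensorProduct.zero_tmul]
    | add a b ha hb => rw [ha, hb, add_zero]
  rw [hz x, hz y]

lemma tensor_subsingleton_right (h : Subsingleton K) : Subsingleton (TensorProduct R S K) := by
  constructor
  intro x y
  have hz : ∀ z : TensorProduct R S K, z = 0 := by
    intro z
    induction z using TensorProduct.induction_on with
    | zero => rfl
    | tmul s k => rw [Subsingleton.elim k 0, TensorProduct.tmul_zero]
    | add a b ha hb => rw [ha, hb, add_zero]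
  rw [hz x, hz y]

end helpers


lemma square_comm {A B C D : Type u}
    [AddCommGroup A] [Module R A] [AddCommGroup B] [Module R B]
    [AddCommGroup C] [Module R C] [AddCommGroup D] [Module R D]
    (f : A →ₗ[R] B) (g : C →ₗ[R] D) (x : TensorProduct R A C) :
    g.lTensor B (f.rTensor C x) = f.rTensor D (g.lTensor A x) := by
  rw [← LinearMap.comp_apply, ← LinearMap.comp_apply,
    LinearMap.rTensor_comp_lTensor, LinearMap.lTensor_comp_rTensor]

/-- Diagonal dimension shift, "down" direction. -/
lemma dshift {S' P' S P K F L : Type u}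
    [AddCommGroup S'] [Module R S'] [AddCommGroup P'] [Module R P']
    [AddCommGroup S] [Module R S] [AddCommGroup P] [Module R P]
    [AddCommGroup K] [Module R K] [AddCommGroup F] [Module R F]
    [AddCommGroup L] [Module R L]
    [Module.Flat R P'] [Module.Flat R P] [Module.Flat R F]
    (ιS' : S' →ₗ[R] P') (pS : P' →ₗ[R] S)
    (ιS : S →ₗ[R] P)
    (ιK : K →ₗ[R] F) (pL : F →ₗ[R] L)
    (h1 : Function.Exact ιS' pS) (h1s : Function.Surjective pS)
    (h2i : Function.Injective ιS)
    (h3 : Function.Exact ιK pL) (h3s : Function.Surjective pL)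
    (h3i : Function.Injective ιK)
    (h : Function.Injective (ιS'.rTensor L)) :
    Function.Injective (ιS.rTensor K) := by
  rw [injective_iff_map_eq_zero]
  intro x hx
  -- Step A : x maps to zero in S ⊗ F
  have hSF : ιK.lTensor S x = 0 := by
    have hinj : Function.Injective (ιS.rTensor F) :=
      Module.Flat.rTensor_preserves_injective_linearMap ιS h2i
    apply hinj
    rw [← square_comm, hx, map_zero, map_zero]
  -- lift x to y in P' ⊗ K
  obtain ⟨y, hy⟩ := LinearMap.rTensor_surjective K h1s x
  set z : TensorProduct R P' F := ιK.lTensor P' y with hzdef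
  have hz0 : pS.rTensor F z = 0 := by
    rw [hzdef, ← square_comm, hy, hSF]
  -- exactness of the middle column tensored with F
  have hcolF : Function.Exact (ιS'.rTensor F) (pS.rTensor F) :=
    rTensor_exact F h1 h1s
  obtain ⟨w, hw⟩ := (hcolF z).mp hz0
  -- push w to S' ⊗ L
  have hw' : ιS'.rTensor L (pL.lTensor S' w) = 0 := by
    have e1 : ιS'.rTensor L (pL.lTensor S' w) = pL.lTensor P' (ιS'.rTensor F w) :=
      (square_comm ιS' pL w).symm
    have e2 : pL.lTensor P' z = 0 := by
      rw [hzdef, ← LinearMap.comp_apply, ← LinearMap.lTensor_comp]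
      have : pL ∘ₗ ιK = 0 := by
        ext k; exact (h3 (ιK k)).mpr ⟨k, rfl⟩
      rw [this, LinearMap.lTensor_zero, LinearMap.zero_apply]
    rw [e1, hw, e2]
  have hw0 : pL.lTensor S' w = 0 := by
    rw [injective_iff_map_eq_zero] at h
    exact h _ hw'
  -- exactness of the S' row
  have hrow : Function.Exact (ιK.lTensor S') (pL.lTensor S') :=
    lTensor_exact S' h3 h3s
  obtain ⟨u, hu⟩ := (hrow w).mp hw0
  -- y equals the image of u
  have hyy : ιS'.rTensor K u = y := by
    have hinj : Function.Injective (ιK.lTensor P') :=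
      Module.Flat.lTensor_preserves_injective_linearMap ιK h3i
    apply hinj
    rw [square_comm, hu, hw, hzdef]
  -- conclude
  have : pS ∘ₗ ιS' = 0 := by
    ext s'; exact (h1 (ιS' s')).mpr ⟨s', rfl⟩
  rw [← hy, ← hyy, ← LinearMap.comp_apply, ← LinearMap.rTensor_comp, this,
    LinearMap.rTensor_zero, LinearMap.zero_apply]

/-- Diagonal dimension shift, "up" direction. -/
lemma dshift_rev {S' P' S P K F L : Type u}
    [AddCommGroup S'] [Module R S'] [AddCommGroup P'] [Module R P']
    [AddCommGroup S] [Module R S] [AddCommGroup P] [Module R P]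
    [AddCommGroup K] [Module R K] [AddCommGroup F] [Module R F]
    [AddCommGroup L] [Module R L]
    [Module.Flat R P] [Module.Flat R F]
    (ιS' : S' →ₗ[R] P') (pS : P' →ₗ[R] S)
    (ιS : S →ₗ[R] P)
    (ιK : K →ₗ[R] F) (pL : F →ₗ[R] L)
    (h1 : Function.Exact ιS' pS) (h1s : Function.Surjective pS)
    (h1i : Function.Injective ιS')
    (h3 : Function.Exact ιK pL) (h3s : Function.Surjective pL)
    (h3i : Function.Injective ιK)
    (h : Function.Injective (ιS.rTensor K)) :
    Function.Injective (ιS'.rTensor L) := by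
  rw [injective_iff_map_eq_zero]
  intro w' hw'
  obtain ⟨w, hw⟩ := LinearMap.lTensor_surjective S' h3s w'
  set z : TensorProduct R P' F := ιS'.rTensor F w with hzdef
  have hz0 : pL.lTensor P' z = 0 := by
    rw [hzdef, square_comm, hw, hw']
  have hrowP' : Function.Exact (ιK.lTensor P') (pL.lTensor P') :=
    lTensor_exact P' h3 h3s
  obtain ⟨y, hy⟩ := (hrowP' z).mp hz0
  set x : TensorProduct R S K := pS.rTensor K y with hxdef
  have hxF : ιK.lTensor S x = 0 := by
    have e1 : ιK.lTensor S (pS.rTensor K y) = pS.rTensor F (ιK.lTensor P' y) :=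
      square_comm pS ιK y
    have e2 : pS.rTensor F z = 0 := by
      rw [hzdef, ← LinearMap.comp_apply, ← LinearMap.rTensor_comp]
      have : pS ∘ₗ ιS' = 0 := by
        ext s'; exact (h1 (ιS' s')).mpr ⟨s', rfl⟩
      rw [this, LinearMap.rTensor_zero, LinearMap.zero_apply]
    rw [hxdef, e1, hy, e2]
  have hx0 : x = 0 := by
    rw [injective_iff_map_eq_zero] at h
    have hinj : Function.Injective (ιK.lTensor P) :=
      Module.Flat.lTensor_preserves_injective_linearMap ιK h3i
    refine h _ (hinj ?_)
    rw [square_comm, hxF, map_zero, map_zero]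
  -- exactness of the K column
  have hcolK : Function.Exact (ιS'.rTensor K) (pS.rTensor K) :=
    rTensor_exact K h1 h1s
  obtain ⟨v, hv⟩ := (hcolK y).mp (by rw [← hxdef, hx0])
  have hwv : ιK.lTensor S' v = w := by
    have hinj : Function.Injective (ιS'.rTensor F) :=
      Module.Flat.rTensor_preserves_injective_linearMap ιS' h1i
    apply hinj
    rw [← square_comm, hv, hy, hzdef]
  have hcomp : pL ∘ₗ ιK = 0 := by
    ext k; exact (h3 (ιK k)).mpr ⟨k, rfl⟩
  rw [← hw, ← hwv, ← LinearMap.comp_apply, ← LinearMap.lTensor_comp, hcomp,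
    LinearMap.lTensor_zero, LinearMap.zero_apply]

/-- Retraction from a split exact sequence. -/
lemma exists_retraction {W Y Z : Type u}
    [AddCommGroup W] [Module R W] [AddCommGroup Y] [Module R Y]
    [AddCommGroup Z] [Module R Z]
    (j : W →ₗ[R] Y) (q : Y →ₗ[R] Z) (hj : Function.Injective j)
    (hrange : LinearMap.range j = LinearMap.ker q)
    (σ : Z →ₗ[R] Y) (hσ : q ∘ₗ σ = LinearMap.id) :
    ∃ t : Y →ₗ[R] W, (∀ w, t (j w) = w) ∧ (∀ y, j (t y) = y - σ (q y)) := by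
  set ψ : Y →ₗ[R] Y := LinearMap.id - σ ∘ₗ q with hψdef
  have hψ : ∀ y, ψ y ∈ LinearMap.range j := by
    intro y
    rw [hrange, LinearMap.mem_ker]
    have : q (σ (q y)) = q y := LinearMap.congr_fun hσ (q y)
    simp [hψdef, this]
  set e : W ≃ₗ[R] LinearMap.range j := LinearEquiv.ofInjective j hj with hedef
  have hje : ∀ z : LinearMap.range j, j (e.symm z) = (z : Y) := by
    intro z
    conv_rhs => rw [← e.apply_symm_apply z]
    rw [hedef]
    simp [LinearEquiv.ofInjective_apply]
  refine ⟨e.symm.toLinearMap ∘ₗ LinearMap.codRestrict (LinearMap.range j) ψ hψ, ?_, ?_⟩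
  · intro w
    apply hj
    have hc : (LinearMap.codRestrict (LinearMap.range j) ψ hψ) (j w) = ⟨ψ (j w), hψ (j w)⟩ :=
      rfl
    simp only [LinearMap.comp_apply, LinearEquiv.coe_coe]
    rw [hc, hje]
    have hq : q (j w) = 0 := by
      have : j w ∈ LinearMap.ker q := hrange ▸ LinearMap.mem_range_self j w
      exact this
    simp [hψdef, hq]
  · intro y
    have hc : (LinearMap.codRestrict (LinearMap.range j) ψ hψ) y = ⟨ψ y, hψ y⟩ := rfl
    simp only [LinearMap.comp_apply, LinearEquiv.coe_coe]
    rw [hc, hje]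
    simp [hψdef]

/-- Transfer of `Tor₁`-vanishing between two projective presentations. -/
lemma transfer {A S P S2 P2 K : Type u}
    [AddCommGroup A] [Module R A] [AddCommGroup S] [Module R S]
    [AddCommGroup P] [Module R P] [AddCommGroup S2] [Module R S2]
    [AddCommGroup P2] [Module R P2] [AddCommGroup K] [Module R K]
    [Module.Projective R P] [Module.Projective R P2]
    (ιS : S →ₗ[R] P) (pA : P →ₗ[R] A) (ι2 : S2 →ₗ[R] P2) (p2 : P2 →ₗ[R] A)
    (hex : Function.Exact ιS pA) (hs : Function.Surjective pA)
    (hi : Function.Injective ιS)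
    (hex2 : Function.Exact ι2 p2) (hs2 : Function.Surjective p2)
    (hi2 : Function.Injective ι2)
    (h : Function.Injective (ιS.rTensor K)) :
    Function.Injective (ι2.rTensor K) := by
  classical
  set φ : (P × P2) →ₗ[R] A := pA ∘ₗ LinearMap.fst R P P2 - p2 ∘ₗ LinearMap.snd R P P2 with hφdef
  set X : Submodule R (P × P2) := LinearMap.ker φ with hXdef
  set π1 : X →ₗ[R] P := LinearMap.fst R P P2 ∘ₗ X.subtype with hπ1def
  set π2 : X →ₗ[R] P2 := LinearMap.snd R P P2 ∘ₗ X.subtype with hπ2def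
  have hmem : ∀ (p : P) (p' : P2), ((p, p') ∈ X ↔ pA p = p2 p') := by
    intro p p'
    simp [hXdef, hφdef, LinearMap.mem_ker, sub_eq_zero]
  -- surjectivity of the two projections
  have hπ2s : Function.Surjective π2 := by
    intro b
    obtain ⟨p, hp⟩ := hs (p2 b)
    exact ⟨⟨(p, b), (hmem p b).mpr hp⟩, rfl⟩
  have hπ1s : Function.Surjective π1 := by
    intro a
    obtain ⟨b, hb⟩ := hs2 (pA a)
    exact ⟨⟨(a, b), (hmem a b).mpr hb.symm⟩, rfl⟩
  -- the two inclusions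
  have hjSmem : ∀ s : S, (ιS s, (0 : P2)) ∈ X := by
    intro s
    rw [hmem]
    rw [hex.apply_apply_eq_zero s, map_zero]
  have hj2mem : ∀ s : S2, ((0 : P), ι2 s) ∈ X := by
    intro s
    rw [hmem]
    rw [hex2.apply_apply_eq_zero s, map_zero]
  set jS : S →ₗ[R] X :=
    LinearMap.codRestrict X ((LinearMap.inl R P P2) ∘ₗ ιS) (fun s => hjSmem s) with hjSdef
  set j2 : S2 →ₗ[R] X :=
    LinearMap.codRestrict X ((LinearMap.inr R P P2) ∘ₗ ι2) (fun s => hj2mem s) with hj2def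
  have hjSi : Function.Injective jS := by
    intro a b hab
    apply hi
    have := congrArg (fun x : X => (x : P × P2).1) hab
    exact this
  have hj2i : Function.Injective j2 := by
    intro a b hab
    apply hi2
    have := congrArg (fun x : X => (x : P × P2).2) hab
    exact this
  have hrangeS : LinearMap.range jS = LinearMap.ker π2 := by
    apply le_antisymm
    · rintro _ ⟨s, rfl⟩
      simp [hjSdef, hπ2def, LinearMap.mem_ker]
      rfl
    · rintro x hx
      have hx2 : (x : P × P2).2 = 0 := hx
      have hpa : pA (x : P × P2).1 = 0 := by
        have := (hmem (x : P × P2).1 (x : P × P2).2).mp (by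
          rw [Prod.mk.eta]; exact x.2)
        rw [hx2, map_zero] at this
        exact this
      obtain ⟨s, hsval⟩ := (hex _).mp hpa
      refine ⟨s, ?_⟩
      apply Subtype.ext
      rw [hjSdef]
      show (ιS s, (0 : P2)) = (x : P × P2)
      rw [hsval, ← hx2, Prod.mk.eta]
  have hrange2 : LinearMap.range j2 = LinearMap.ker π1 := by
    apply le_antisymm
    · rintro _ ⟨s, rfl⟩
      simp [hj2def, hπ1def, LinearMap.mem_ker]
      rfl
    · rintro x hx
      have hx1 : (x : P × P2).1 = 0 := hx
      have hpa : p2 (x : P × P2).2 = 0 := by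
        have := (hmem (x : P × P2).1 (x : P × P2).2).mp (by
          rw [Prod.mk.eta]; exact x.2)
        rw [hx1, map_zero] at this
        exact this.symm
      obtain ⟨s, hsval⟩ := (hex2 _).mp hpa
      refine ⟨s, ?_⟩
      apply Subtype.ext
      rw [hj2def]
      show ((0 : P), ι2 s) = (x : P × P2)
      rw [hsval, ← hx1, Prod.mk.eta]
  -- sections
  obtain ⟨σ2, hσ2⟩ := Module.projective_lifting_property π2 LinearMap.id hπ2s
  obtain ⟨σ1, hσ1⟩ := Module.projective_lifting_property π1 LinearMap.id hπ1s
  obtain ⟨t, htj, hjt⟩ := exists_retraction jS π2 hjSi hrangeS σ2 hσ2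
  obtain ⟨t2, ht2j, _⟩ := exists_retraction j2 π1 hj2i hrange2 σ1 hσ1
  -- identities of maps
  have hπ2j2 : π2 ∘ₗ j2 = ι2 := by ext s; rfl
  have hπ1j2 : π1 ∘ₗ j2 = 0 := by ext s; rfl
  have hπ1jS : π1 ∘ₗ jS = ιS := by ext s; rfl
  have hid : jS ∘ₗ t + σ2 ∘ₗ π2 = LinearMap.id := LinearMap.ext fun y => by
    simp only [LinearMap.add_apply, LinearMap.comp_apply, LinearMap.id_apply]
    rw [hjt y]
    abel
  -- the chase
  rw [injective_iff_map_eq_zero]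
  intro v hv
  set x := j2.rTensor K v with hxdef
  have hπ2x : π2.rTensor K x = 0 := by
    rw [hxdef, ← LinearMap.rTensor_comp_apply, hπ2j2, hv]
  have hπ1x : π1.rTensor K x = 0 := by
    rw [hxdef, ← LinearMap.rTensor_comp_apply, hπ1j2, LinearMap.rTensor_zero,
      LinearMap.zero_apply]
  have hxdecomp : x = jS.rTensor K (t.rTensor K x) := by
    have hthis := LinearMap.congr_fun (congrArg (fun f => LinearMap.rTensor K f) hid) x
    simp only [LinearMap.rTensor_add, LinearMap.rTensor_id, LinearMap.add_apply,
      LinearMap.id_apply, LinearMap.rTensor_comp, LinearMap.comp_apply] at hthis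
    rw [hπ2x, map_zero, add_zero] at hthis
    exact hthis.symm
  have hu : t.rTensor K x = 0 := by
    have e1 : ιS.rTensor K (t.rTensor K x) = 0 := by
      have e2 : ιS.rTensor K (t.rTensor K x) = π1.rTensor K x := by
        conv_rhs => rw [hxdecomp, ← LinearMap.rTensor_comp_apply, hπ1jS]
      rw [e2, hπ1x]
    exact h (by rw [e1, map_zero])
  have hx0 : x = 0 := by rw [hxdecomp, hu, map_zero]
  have : (t2 ∘ₗ j2).rTensor K v = 0 := by
    rw [LinearMap.rTensor_comp, LinearMap.comp_apply, ← hxdef, hx0, map_zero]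
  have ht2id : t2 ∘ₗ j2 = LinearMap.id := by ext s; simp [ht2j]
  rw [← this, ht2id, LinearMap.rTensor_id, LinearMap.id_apply]
section assemble

lemma assemble_flat : ∀ (n : ℕ) (Y G : ℕ → ModuleCat.{u} R)
    (p : ∀ m, G m →ₗ[R] Y m) (ι : ∀ m, Y (m+1) →ₗ[R] G m),
    (∀ m, Module.Flat R (G m)) →
    (∀ m, Function.Surjective (p m)) → (∀ m, Function.Injective (ι m)) →
    (∀ m, Function.Exact (ι m) (p m)) →
    Module.Flat R (Y n) → HasFlatDimLE (Y 0) n := by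
  intro n
  induction n with
  | zero =>
    intro Y G p ι _ _ _ _ hflat
    refine ⟨fun i => match i with | 0 => Y 0 | _+1 => ModuleCat.of R PUnit,
      fun i => 0, 𝟙 (Y 0), ?_, ?_, ?_, ?_, ?_⟩
    · intro i
      match i with
      | 0 => exact hflat
      | _+1 => exact inferInstanceAs (Module.Flat R PUnit.{u+1})
    · exact fun y => ⟨y, rfl⟩
    · apply le_antisymm
      · intro x hx
        have : x = 0 := hx
        simp [this]
      · intro x hx
        obtain ⟨y, rfl⟩ := hx
        rw [Subsingleton.elim y 0, map_zero]
        simp [LinearMap.mem_ker]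
    · intro i
      apply le_antisymm
      · intro x _
        exact ⟨0, Subsingleton.elim _ _⟩
      · intro x _
        have hx0 : x = (0 : (fun i => match i with | 0 => Y 0 | _+1 => ModuleCat.of R PUnit) (i+1)) :=
          Subsingleton.elim _ _
        simp [LinearMap.mem_ker, hx0]
    · intro i hi
      match i, hi with
      | (j+1), _ => exact inferInstanceAs (Subsingleton PUnit)
  | succ n IH =>
    intro Y G p ι hGflat hps hιi hex hflat
    obtain ⟨F', d', ε', hfl', hsur', hk0', hks', hsub'⟩ :=
      IH (fun m => Y (m+1)) (fun m => G (m+1)) (fun m => p (m+1)) (fun m => ι (m+1))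
        (fun m => hGflat (m+1)) (fun m => hps (m+1)) (fun m => hιi (m+1))
        (fun m => hex (m+1)) hflat
    refine ⟨fun i => match i with | 0 => G 0 | i+1 => F' i,
      fun i => match i with
        | 0 => ModuleCat.ofHom ((ι 0).comp ε'.hom)
        | i+1 => d' i,
      ModuleCat.ofHom (p 0), ?_, ?_, ?_, ?_, ?_⟩
    · intro i
      match i with
      | 0 => exact hGflat 0
      | i+1 => exact hfl' i
    · exact hps 0
    · show LinearMap.ker (p 0) = LinearMap.range ((ι 0).comp ε'.hom)
      rw [LinearMap.exact_iff.mp (hex 0), LinearMap.range_comp,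
        LinearMap.range_eq_top.mpr hsur', Submodule.map_top]
    · intro i
      match i with
      | 0 =>
        show LinearMap.ker ((ι 0).comp ε'.hom) = LinearMap.range (d' 0).hom
        rw [LinearMap.ker_comp, LinearMap.ker_eq_bot.mpr (hιi 0), Submodule.comap_bot]
        exact hk0'
      | i+1 => exact hks' i
    · intro i hi
      match i, hi with
      | (j+1), hj => exact hsub' j (by omega)

lemma assemble_proj : ∀ (n : ℕ) (Y G : ℕ → ModuleCat.{u} R)
    (p : ∀ m, G m →ₗ[R] Y m) (ι : ∀ m, Y (m+1) →ₗ[R] G m),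
    (∀ m, Module.Projective R (G m)) →
    (∀ m, Function.Surjective (p m)) → (∀ m, Function.Injective (ι m)) →
    (∀ m, Function.Exact (ι m) (p m)) →
    Module.Projective R (Y n) → HasProjDimLE (Y 0) n := by
  intro n
  induction n with
  | zero =>
    intro Y G p ι _ _ _ _ hproj
    refine ⟨fun i => match i with | 0 => Y 0 | _+1 => ModuleCat.of R PUnit,
      fun i => 0, 𝟙 (Y 0), ?_, ?_, ?_, ?_, ?_⟩
    · intro i
      match i with
      | 0 => exact hproj
      | _+1 => exact inferInstanceAs (Module.Projective R PUnit.{u+1})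
    · exact fun y => ⟨y, rfl⟩
    · apply le_antisymm
      · intro x hx
        have : x = 0 := hx
        simp [this]
      · intro x hx
        obtain ⟨y, rfl⟩ := hx
        rw [Subsingleton.elim y 0, map_zero]
        simp [LinearMap.mem_ker]
    · intro i
      apply le_antisymm
      · intro x _
        exact ⟨0, Subsingleton.elim _ _⟩
      · intro x _
        have hx0 : x = (0 : (fun i => match i with | 0 => Y 0 | _+1 => ModuleCat.of R PUnit) (i+1)) :=
          Subsingleton.elim _ _
        simp [LinearMap.mem_ker, hx0]
    · intro i hi
      match i, hi with
      | (j+1), _ => exact inferInstanceAs (Subsingleton PUnit)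
  | succ n IH =>
    intro Y G p ι hGproj hps hιi hex hproj
    obtain ⟨F', d', ε', hfl', hsur', hk0', hks', hsub'⟩ :=
      IH (fun m => Y (m+1)) (fun m => G (m+1)) (fun m => p (m+1)) (fun m => ι (m+1))
        (fun m => hGproj (m+1)) (fun m => hps (m+1)) (fun m => hιi (m+1))
        (fun m => hex (m+1)) hproj
    refine ⟨fun i => match i with | 0 => G 0 | i+1 => F' i,
      fun i => match i with
        | 0 => ModuleCat.ofHom ((ι 0).comp ε'.hom)
        | i+1 => d' i,
      ModuleCat.ofHom (p 0), ?_, ?_, ?_, ?_, ?_⟩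
    · intro i
      match i with
      | 0 => exact hGproj 0
      | i+1 => exact hfl' i
    · exact hps 0
    · show LinearMap.ker (p 0) = LinearMap.range ((ι 0).comp ε'.hom)
      rw [LinearMap.exact_iff.mp (hex 0), LinearMap.range_comp,
        LinearMap.range_eq_top.mpr hsur', Submodule.map_top]
    · intro i
      match i with
      | 0 =>
        show LinearMap.ker ((ι 0).comp ε'.hom) = LinearMap.range (d' 0).hom
        rw [LinearMap.ker_comp, LinearMap.ker_eq_bot.mpr (hιi 0), Submodule.comap_bot]
        exact hk0'
      | i+1 => exact hks' i
    · intro i hi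
      match i, hi with
      | (j+1), hj => exact hsub' j (by omega)

end assemble

section coherence

lemma coh_submodule (hcoh : ∀ I : Ideal R, I.FG → Module.FinitePresentation R I) :
    ∀ (k : ℕ) (Nsub : Submodule R (Fin k → R)), Nsub.FG →
      Module.FinitePresentation R ↥Nsub := by
  intro k
  induction k with
  | zero =>
    intro Nsub _
    haveI : Subsingleton (Fin 0 → R) := ⟨fun a b => funext fun i => Fin.elim0 i⟩
    haveI : Subsingleton ↥Nsub := ⟨fun a b => Subtype.ext (Subsingleton.elim _ _)⟩
    refine Module.finitePresentation_of_surjective (0 : R →ₗ[R] ↥Nsub)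
      (fun y => ⟨0, Subsingleton.elim _ _⟩) ?_
    rw [LinearMap.ker_zero]
    exact ⟨{1}, by simp [Ideal.span_singleton_one]⟩
  | succ k IH =>
    intro Nsub hfg
    haveI hNfin : Module.Finite R ↥Nsub := Module.Finite.iff_fg.mpr hfg
    set φ : ↥Nsub →ₗ[R] R := (LinearMap.proj (Fin.last k)) ∘ₗ Nsub.subtype with hφdef
    set I : Ideal R := LinearMap.range φ with hIdef
    haveI : Module.Finite R ↥I := Module.Finite.range φ
    have hIfg : I.FG := Module.Finite.iff_fg.mp inferInstance
    haveI hIfp : Module.FinitePresentation R ↥I := hcoh I hIfg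
    have hφ's : Function.Surjective φ.rangeRestrict := LinearMap.surjective_rangeRestrict φ
    have hker_fg : (LinearMap.ker φ.rangeRestrict).FG :=
      Module.FinitePresentation.fg_ker φ.rangeRestrict hφ's
    haveI : Module.Finite R ↥(LinearMap.ker φ.rangeRestrict) := Module.Finite.iff_fg.mpr hker_fg
    set ψ : ↥Nsub →ₗ[R] (Fin k → R) :=
      (LinearMap.funLeft R R Fin.castSucc) ∘ₗ Nsub.subtype with hψdef
    set θ : ↥(LinearMap.ker φ.rangeRestrict) →ₗ[R] (Fin k → R) :=
      ψ ∘ₗ (LinearMap.ker φ.rangeRestrict).subtype with hθdef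
    have hθi : Function.Injective θ := by
      intro a b hab
      have hlast : ((a : ↥Nsub) : Fin (k+1) → R) (Fin.last k) =
          ((b : ↥Nsub) : Fin (k+1) → R) (Fin.last k) := by
        have ha : φ.rangeRestrict (a : ↥Nsub) = 0 := a.2
        have hb : φ.rangeRestrict (b : ↥Nsub) = 0 := b.2
        have ha' : φ (a : ↥Nsub) = 0 := by
          have := congrArg (Subtype.val) ha; exact this
        have hb' : φ (b : ↥Nsub) = 0 := by
          have := congrArg (Subtype.val) hb; exact this
        have ha'' : ((a : ↥Nsub) : Fin (k+1) → R) (Fin.last k) = 0 := ha'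
        have hb'' : ((b : ↥Nsub) : Fin (k+1) → R) (Fin.last k) = 0 := hb'
        rw [ha'', hb'']
      have hinit : ∀ i : Fin k, ((a : ↥Nsub) : Fin (k+1) → R) i.castSucc =
          ((b : ↥Nsub) : Fin (k+1) → R) i.castSucc := by
        intro i
        have := congrFun hab i
        simpa [hθdef, hψdef, LinearMap.funLeft] using this
      apply Subtype.ext
      apply Subtype.ext
      funext i
      induction i using Fin.lastCases with
      | last => exact hlast
      | cast i => exact hinit i
    haveI : Module.Finite R ↥(LinearMap.range θ) := Module.Finite.range θ
    have hK'fg : (LinearMap.range θ).FG := Module.Finite.iff_fg.mp inferInstance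
    haveI hK'fp : Module.FinitePresentation R ↥(LinearMap.range θ) := IH _ hK'fg
    haveI : Module.FinitePresentation R ↥(LinearMap.ker φ.rangeRestrict) := by
      set e : ↥(LinearMap.ker φ.rangeRestrict) ≃ₗ[R] ↥(LinearMap.range θ) :=
        LinearEquiv.ofInjective θ hθi with hedef
      exact Module.FinitePresentation.of_equiv (R := R) (M := ↥(LinearMap.range θ))
        (N := ↥(LinearMap.ker φ.rangeRestrict)) e.symm
    exact Module.finitePresentation_of_ker φ.rangeRestrict hφ's

end coherence

section towers

/-- The canonical free cover of a module. -/
noncomputable def cov (N : Type u) [AddCommGroup N] [Module R N] : (N →₀ R) →ₗ[R] N :=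
  Finsupp.linearCombination R id

lemma cov_surjective (N : Type u) [AddCommGroup N] [Module R N] :
    Function.Surjective (cov (R := R) N) := by
  rw [← LinearMap.range_eq_top, cov, Finsupp.range_linearCombination]
  simp

/-- The tower of syzygies of `N` along canonical free covers. -/
noncomputable def towL (N : ModuleCat.{u} R) : ℕ → ModuleCat.{u} R
  | 0 => N
  | (j+1) => ModuleCat.of R ↥(LinearMap.ker (cov (R := R) ↑(towL N j)))

/-- A finite free cover of a finite module. -/
noncomputable def fcov (Y : Type u) [AddCommGroup Y] [Module R Y] [Module.Finite R Y] :
    Σ' (k : ℕ) (π : (Fin k → R) →ₗ[R] Y), Function.Surjective π := by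
  have h := Module.Finite.exists_fin' R Y
  exact ⟨h.choose, h.choose_spec.choose, h.choose_spec.choose_spec⟩

/-- The tower of syzygies of a finitely presented module along finite free covers,
carrying finite presentation. -/
noncomputable def towM (hcoh : ∀ I : Ideal R, I.FG → Module.FinitePresentation R I)
    (M0 : ModuleCat.{u} R) (h0 : Module.FinitePresentation R M0) :
    ℕ → Σ' (Y : ModuleCat.{u} R), Module.FinitePresentation R ↑Y
  | 0 => ⟨M0, h0⟩
  | (j+1) =>
    let prev := towM hcoh M0 h0 j
    haveI : Module.FinitePresentation R ↑prev.1 := prev.2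
    ⟨ModuleCat.of R ↥(LinearMap.ker (fcov (R := R) ↑prev.1).2.1),
      coh_submodule hcoh _ _
        (Module.FinitePresentation.fg_ker _ (fcov (R := R) ↑prev.1).2.2)⟩

end towers

section backward

lemma backward_flat (n : ℕ)
    (hP : ∀ (M : Type u) [AddCommGroup M] [Module R M],
        Module.FinitePresentation R M → HasProjDimLE (ModuleCat.of R M) n)
    (N : Type u) [AddCommGroup N] [Module R N] :
    HasFlatDimLE (ModuleCat.of R N) n := by
  set Y : ℕ → ModuleCat.{u} R := towL (ModuleCat.of R N) with hYdef
  have hflat : Module.Flat R ↑(Y n) := by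
    rw [Module.Flat.iff_rTensor_injective]
    intro I hI
    have hAfp : Module.FinitePresentation R (R ⧸ I) :=
      Module.finitePresentation_of_surjective I.mkQ (Submodule.mkQ_surjective I)
        (by rw [Submodule.ker_mkQ]; exact hI)
    obtain ⟨Q, d, ε, hQproj, hεs, hk0, hks, hQsub⟩ := hP (R ⧸ I) hAfp
    have key : ∀ t j, j + t = n → Function.Injective
        ((LinearMap.range (d j).hom).subtype.rTensor ↑(Y t)) := by
      intro t
      induction t with
      | zero =>
        intro j hj
        have hsub : Subsingleton ↥(LinearMap.range (d j).hom) := by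
          haveI := hQsub (j+1) (by omega)
          constructor
          rintro ⟨_, x, rfl⟩ ⟨_, y, rfl⟩
          exact Subtype.ext (congrArg (d j).hom (Subsingleton.elim x y))
        haveI := tensor_subsingleton_left (R := R) (K := ↑(Y 0)) hsub
        intro a b _
        exact Subsingleton.elim a b
      | succ t IH =>
        intro j hj
        haveI := hQproj j; haveI := hQproj (j+1)
        haveI : Module.Flat R ↑(Q j) := Module.Flat.of_projective
        haveI : Module.Flat R ↑(Q (j+1)) := Module.Flat.of_projective
        refine dshift ((LinearMap.range (d (j+1)).hom).subtype) ((d j).hom.rangeRestrict)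
          ((LinearMap.range (d j).hom).subtype)
          ((LinearMap.ker (cov (R := R) ↑(Y t))).subtype) (cov (R := R) ↑(Y t))
          ?_ (LinearMap.surjective_rangeRestrict _) (Submodule.injective_subtype _)
          (LinearMap.exact_subtype_ker_map _) (cov_surjective _) (Submodule.injective_subtype _)
          (IH (j+1) (by omega))
        rw [LinearMap.exact_iff, LinearMap.ker_rangeRestrict, hks j, Submodule.range_subtype]
    have W0 := key n 0 (by omega)
    haveI := hQproj 0
    exact transfer ((LinearMap.range (d 0).hom).subtype) ε.hom
      I.subtype I.mkQ
      (by rw [LinearMap.exact_iff, Submodule.range_subtype]; exact hk0) hεs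
      (Submodule.injective_subtype _) (LinearMap.exact_subtype_mkQ I)
      (Submodule.mkQ_surjective I) (Submodule.injective_subtype I) W0
  exact assemble_flat n Y (fun m => ModuleCat.of R (↑(Y m) →₀ R))
    (fun m => cov (R := R) ↑(Y m))
    (fun m => (LinearMap.ker (cov (R := R) ↑(Y m))).subtype)
    (fun m => inferInstanceAs (Module.Flat R (↑(Y m) →₀ R)))
    (fun m => cov_surjective _) (fun m => Submodule.injective_subtype _)
    (fun m => LinearMap.exact_subtype_ker_map _) hflat

end backward

section chains

/-- Abstract "upward" chain along `dshift_rev`. -/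
lemma chain_rev (n : ℕ) (A : Type u) [AddCommGroup A] [Module R A]
    (U Cf W G : ℕ → Type u)
    [∀ j, AddCommGroup (U j)] [∀ j, Module R (U j)]
    [∀ j, AddCommGroup (Cf j)] [∀ j, Module R (Cf j)]
    [∀ t, AddCommGroup (W t)] [∀ t, Module R (W t)]
    [∀ t, AddCommGroup (G t)] [∀ t, Module R (G t)]
    (hCfflat : ∀ j, Module.Flat R (Cf j)) (hGflat : ∀ t, Module.Flat R (G t))
    (e : ∀ j, U j →ₗ[R] Cf j) (q : ∀ j, Cf (j+1) →ₗ[R] U j)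
    (p0 : Cf 0 →ₗ[R] A)
    (hx0 : Function.Exact (e 0) p0) (hs0 : Function.Surjective p0)
    (hxj : ∀ j, Function.Exact (e (j+1)) (q j)) (hsj : ∀ j, Function.Surjective (q j))
    (hei : ∀ j, Function.Injective (e j))
    (ιW : ∀ t, W (t+1) →ₗ[R] G t) (pW : ∀ t, G t →ₗ[R] W t)
    (hexW : ∀ t, Function.Exact (ιW t) (pW t)) (hpWs : ∀ t, Function.Surjective (pW t))
    (hιWi : ∀ t, Function.Injective (ιW t))
    (hWsub : Subsingleton (W (n+1))) :
    ∀ j t, j + t = n → Function.Injective ((e j).rTensor (W t)) := by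
  intro j
  induction j with
  | zero =>
    intro t ht
    have htn : t = n := by omega
    subst htn
    haveI : Module.Flat R (G t) := hGflat t
    refine dshift_rev (R := R) (P := R) (e 0) p0 (0 : A →ₗ[R] R)
      (ιW t) (pW t) hx0 hs0 (hei 0) (hexW t) (hpWs t) (hιWi t) ?_
    haveI := tensor_subsingleton_right (R := R) (S := A) hWsub
    intro a b _
    exact Subsingleton.elim a b
  | succ j IHj =>
    intro t ht
    haveI := hCfflat j
    haveI := hGflat t
    exact dshift_rev (R := R) (P := Cf j) (e (j+1)) (q j) (e j)
      (ιW t) (pW t) (hxj j) (hsj j) (hei (j+1)) (hexW t) (hpWs t) (hιWi t)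
      (IHj (t+1) (by omega))

/-- Abstract "downward" chain along `dshift`. -/
lemma chain_fwd (n : ℕ)
    (U Cf Ym CY : ℕ → Type u)
    [∀ j, AddCommGroup (U j)] [∀ j, Module R (U j)]
    [∀ j, AddCommGroup (Cf j)] [∀ j, Module R (Cf j)]
    [∀ t, AddCommGroup (Ym t)] [∀ t, Module R (Ym t)]
    [∀ t, AddCommGroup (CY t)] [∀ t, Module R (CY t)]
    (hCfflat : ∀ j, Module.Flat R (Cf j)) (hCYflat : ∀ t, Module.Flat R (CY t))
    (e : ∀ j, U j →ₗ[R] Cf j) (q : ∀ j, Cf (j+1) →ₗ[R] U j)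
    (hxj : ∀ j, Function.Exact (e (j+1)) (q j)) (hsj : ∀ j, Function.Surjective (q j))
    (hei : ∀ j, Function.Injective (e j))
    (ιY : ∀ t, Ym (t+1) →ₗ[R] CY t) (pY : ∀ t, CY t →ₗ[R] Ym t)
    (hexY : ∀ t, Function.Exact (ιY t) (pY t)) (hpYs : ∀ t, Function.Surjective (pY t))
    (hιYi : ∀ t, Function.Injective (ιY t))
    (hbase : Function.Injective ((e n).rTensor (Ym 0))) :
    ∀ t j, j + t = n → Function.Injective ((e j).rTensor (Ym t)) := by
  intro t
  induction t with
  | zero =>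
    intro j hj
    have hjn : j = n := by omega
    subst hjn
    exact hbase
  | succ t IHt =>
    intro j hj
    haveI := hCfflat j
    haveI := hCfflat (j+1)
    haveI := hCYflat t
    exact dshift (R := R) (e (j+1)) (q j) (e j) (ιY t) (pY t)
      (hxj j) (hsj j) (hei j) (hexY t) (hpYs t) (hιYi t)
      (IHt (j+1) (by omega))

end chains

section forward

lemma forward_proj (hcoh : ∀ I : Ideal R, I.FG → Module.FinitePresentation R I) (n : ℕ)
    (hF : ∀ (N : Type u) [AddCommGroup N] [Module R N],
        HasFlatDimLE (ModuleCat.of R N) n)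
    (M : Type u) [AddCommGroup M] [Module R M] (hM : Module.FinitePresentation R M) :
    HasProjDimLE (ModuleCat.of R M) n := by
  classical
  set T := towM hcoh (ModuleCat.of R M) hM with hT
  let Ym : ℕ → ModuleCat.{u} R := fun t => (T t).1
  let πd : ∀ t, Σ' (k : ℕ) (π : (Fin k → R) →ₗ[R] ↑(Ym t)), Function.Surjective π :=
    fun t => haveI : Module.FinitePresentation R ↑(Ym t) := (T t).2
      fcov (R := R) ↑(Ym t)
  have hflat : Module.Flat R ↑(Ym n) := by
    rw [Module.Flat.iff_rTensor_injective]
    intro I hI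
    let U : ℕ → ModuleCat.{u} R := towL (ModuleCat.of R ↥I)
    let Cf : ℕ → ModuleCat.{u} R := fun j => match j with
      | 0 => ModuleCat.of R R
      | j+1 => ModuleCat.of R (↑(U j) →₀ R)
    let e : ∀ j, ↑(U j) →ₗ[R] ↑(Cf j) := fun j => match j with
      | 0 => I.subtype
      | j+1 => (LinearMap.ker (cov (R := R) ↑(U j))).subtype
    let q : ∀ j, ↑(Cf (j+1)) →ₗ[R] ↑(U j) := fun j => cov (R := R) ↑(U j)
    have hei : ∀ j, Function.Injective (e j) := fun j => match j with
      | 0 => Submodule.injective_subtype I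
      | j+1 => Submodule.injective_subtype _
    have hCflat : ∀ j, Module.Flat R ↑(Cf j) := fun j => match j with
      | 0 => inferInstanceAs (Module.Flat R R)
      | j+1 => inferInstanceAs (Module.Flat R (↑(U j) →₀ R))
    have hxj : ∀ j, Function.Exact (e (j+1)) (q j) := fun j =>
      LinearMap.exact_subtype_ker_map _
    have hsj : ∀ j, Function.Surjective (q j) := fun j => cov_surjective _
    obtain ⟨G, dG, εG, hGflat, hGs, hGk0, hGks, hGsub⟩ := hF M
    let W : ℕ → ModuleCat.{u} R := fun t => match t with
      | 0 => ModuleCat.of R M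
      | t+1 => ModuleCat.of R ↥(LinearMap.range (dG t).hom)
    let pW : ∀ t, ↑(G t) →ₗ[R] ↑(W t) := fun t => match t with
      | 0 => εG.hom
      | t+1 => (dG t).hom.rangeRestrict
    let ιW : ∀ t, ↑(W (t+1)) →ₗ[R] ↑(G t) := fun t => (LinearMap.range (dG t).hom).subtype
    have hpWs : ∀ t, Function.Surjective (pW t) := fun t => match t with
      | 0 => hGs
      | t+1 => LinearMap.surjective_rangeRestrict _
    have hιWi : ∀ t, Function.Injective (ιW t) := fun t => Submodule.injective_subtype _
    have hexW : ∀ t, Function.Exact (ιW t) (pW t) := fun t => match t with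
      | 0 => by
          rw [LinearMap.exact_iff]
          show LinearMap.ker εG.hom = _
          rw [hGk0, Submodule.range_subtype]
      | t+1 => by
          rw [LinearMap.exact_iff, LinearMap.ker_rangeRestrict, hGks t,
            Submodule.range_subtype]
    have hWsub : Subsingleton ↑(W (n+1)) := by
      haveI := hGsub (n+1) (by omega)
      constructor
      rintro ⟨_, x, rfl⟩ ⟨_, y, rfl⟩
      exact Subtype.ext (congrArg (dG n).hom (Subsingleton.elim x y))
    have P1 := chain_rev n (R ⧸ I) (fun j => ↑(U j)) (fun j => ↑(Cf j))
      (fun t => ↑(W t)) (fun t => ↑(G t)) hCflat hGflat e q I.mkQ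
      (LinearMap.exact_subtype_mkQ I) (Submodule.mkQ_surjective I)
      hxj hsj hei ιW pW hexW hpWs hιWi hWsub
    have P2 := chain_fwd n (fun j => ↑(U j)) (fun j => ↑(Cf j))
      (fun t => ↑(Ym t)) (fun t => (Fin (πd t).1 → R)) hCflat
      (fun t => inferInstanceAs (Module.Flat R (Fin (πd t).1 → R))) e q hxj hsj hei
      (fun t => (LinearMap.ker (πd t).2.1).subtype) (fun t => (πd t).2.1)
      (fun t => LinearMap.exact_subtype_ker_map _) (fun t => (πd t).2.2)
      (fun t => Submodule.injective_subtype _)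
      (P1 n 0 (by omega))
    exact P2 n 0 (by omega)
  haveI : Module.FinitePresentation R ↑(Ym n) := (T n).2
  haveI : Module.Flat R ↑(Ym n) := hflat
  obtain ⟨κ, h₂, h₃, hfac⟩ :=
    Module.Flat.exists_factorization_of_isFinitelyPresented
      (LinearMap.id : ↑(Ym n) →ₗ[R] ↑(Ym n))
  have hproj : Module.Projective R ↑(Ym n) := Module.Projective.of_split h₂ h₃ hfac.symm
  exact assemble_proj n Ym (fun t => ModuleCat.of R (Fin (πd t).1 → R))
    (fun t => (πd t).2.1) (fun t => (LinearMap.ker (πd t).2.1).subtype)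
    (fun t => inferInstanceAs (Module.Projective R (Fin (πd t).1 → R)))
    (fun t => (πd t).2.2) (fun t => Submodule.injective_subtype _)
    (fun t => LinearMap.exact_subtype_ker_map _) hproj

end forward

/-- For a coherent ring `R`, the weak global dimension of `R` is finite if and
only if there is a uniform finite bound on the projective dimensions of all
finitely presented `R`-modules. -/
theorem coherent_weakGlobalDim_finite_iff_uniform_projDim_bound (R : Type u) [CommRing R]
    (hcoh : ∀ I : Ideal R, I.FG → Module.FinitePresentation R I) :
    (∃ n : ℕ, ∀ (N : Type u) [AddCommGroup N] [Module R N],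
        HasFlatDimLE (ModuleCat.of R N) n) ↔
      (∃ n : ℕ, ∀ (M : Type u) [AddCommGroup M] [Module R M],
        Module.FinitePresentation R M → HasProjDimLE (ModuleCat.of R M) n) := by
  constructor
  · rintro ⟨n, hF⟩
    exact ⟨n, fun M _ _ hM => forward_proj hcoh n (fun N _ _ => hF N) M hM⟩
  · rintro ⟨n, hP⟩
    exact ⟨n, fun N _ _ => backward_flat n (fun M _ _ hM => hP M hM) N⟩
end
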